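/- arXiv:math/0611624 — 2 statements merged into one kernel-verified Lean document; each statement's English description precedes it below -/
import Mathlib

section
/- For every integer n ≥ 2 and every complex x (in the domain where both sides are defined), Zagier's modified polylogarithm satisfies the distribution relation ℒₙ(x) + ℒₙ(−x) = ℒₙ(x²)/2^{n−1}. -/
open scoped Real

noncomputable def Li : ℕ → ℂ → ℂ
  | 0, x => x / (1 - x)
  | 1, x => -Complex.log (1 - x)
  | (k+2), x => ∫ t in (0:ℝ)..1, Li (k+1) ((t : ℂ) * x) / (t : ℂ)

/-- `reₙ`: the real part if `n` is odd, the imaginary part if `n` is even. -/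
noncomputable def reN (n : ℕ) (z : ℂ) : ℝ := if Odd n then z.re else z.im

/-- Zagier's single-valued modification of the `n`-th polylogarithm. -/
noncomputable def sv (n : ℕ) (x : ℂ) : ℝ :=
  reN n (∑ j ∈ Finset.range n,
    (2:ℂ)^j * ((bernoulli j : ℚ) : ℂ) / (Nat.factorial j : ℂ)
      * ((Real.log ‖x‖ : ℂ))^j * Li (n - j) x)

open MeasureTheory Set intervalIntegral

namespace SvDist

/-- The domain avoiding the cut `[1, ∞)`. -/
def U : Set ℂ := {z | z.im ≠ 0 ∨ z.re < 1}

/-- The domain in the hypothesis. -/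
def D : Set ℂ := {z | z.im ≠ 0 ∨ ‖z‖ < 1}

lemma D_sub_U : D ⊆ U := fun z hz => hz.imp id fun h =>
  lt_of_le_of_lt (le_trans (le_abs_self _) (Complex.abs_re_le_norm z)) h

lemma neg_mem_D {z : ℂ} (hz : z ∈ D) : -z ∈ D := by
  rcases hz with h | h
  · left; simpa using h
  · right; simpa using h

lemma U_smul {z : ℂ} (hz : z ∈ U) {t : ℝ} (h0 : 0 ≤ t) (h1 : t ≤ 1) : (t:ℂ) * z ∈ U := by
  rcases eq_or_lt_of_le h0 with h | h
  · right
    rw [← h]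
    norm_num
  · rcases hz with him | hre
    · left
      rw [Complex.im_ofReal_mul]
      exact mul_ne_zero (ne_of_gt h) him
    · right
      rw [Complex.re_ofReal_mul]
      rcases le_or_gt z.re 0 with h' | h' <;> nlinarith

lemma D_smul {z : ℂ} (hz : z ∈ D) {t : ℝ} (h0 : 0 < t) (h1 : t ≤ 1) : (t:ℂ) * z ∈ D := by
  rcases hz with him | hab
  · left
    rw [Complex.im_ofReal_mul]
    exact mul_ne_zero (ne_of_gt h0) him
  · right
    rw [norm_mul, Complex.norm_real, Real.norm_eq_abs, abs_of_pos h0]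
    nlinarith [norm_nonneg z]

lemma slit_of_U {z : ℂ} (hz : z ∈ U) : 1 - z ∈ Complex.slitPlane := by
  rw [Complex.mem_slitPlane_iff]
  rcases hz with h | h
  · right
    simp only [Complex.sub_im, Complex.one_im, zero_sub]
    exact neg_ne_zero.mpr h
  · left
    simp only [Complex.sub_re, Complex.one_re]
    linarith

lemma sq_mem_U {x : ℂ} (hx : x ∈ D) : x^2 ∈ U := by
  rcases hx with him | hab
  · by_cases h2 : (x^2).im = 0
    · right
      have h3 : x.re * x.im + x.im * x.re = 0 := by
        simpa [pow_two, Complex.mul_im] using h2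
      have hre : x.re = 0 := by
        rw [mul_comm x.im x.re] at h3
        have : x.re * x.im = 0 := by linarith
        rcases mul_eq_zero.mp this with h | h
        · exact h
        · exact absurd h him
      have : (x^2).re = - x.im^2 := by
        simp [pow_two, Complex.mul_re, hre]
      rw [this]
      nlinarith [sq_nonneg x.im]
    · left; exact h2
  · right
    have h1 : ‖x^2‖ < 1 := by
      rw [norm_pow]
      exact pow_lt_one₀ (norm_nonneg x) hab two_ne_zero
    exact lt_of_le_of_lt (le_trans (le_abs_self _) (Complex.abs_re_le_norm _)) h1

lemma Li_zero : ∀ k, Li k 0 = 0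
  | 0 => by simp [Li]
  | 1 => by simp [Li]
  | (k+2) => by
      have h := Li_zero (k+1)
      simp only [Li, mul_zero, h, zero_div]
      simp

lemma Li_two_def (k : ℕ) (x : ℂ) :
    Li (k+2) x = ∫ t in (0:ℝ)..1, Li (k+1) ((t : ℂ) * x) / (t : ℂ) := rfl

lemma contBound : ∀ k : ℕ, ∀ z ∈ U,
    ContinuousOn (fun t : ℝ => Li (k+1) ((t:ℂ) * z)) (Icc 0 1) ∧
    ∃ C : ℝ, 0 ≤ C ∧ ∀ t ∈ Icc (0:ℝ) 1, ‖Li (k+1) ((t:ℂ) * z)‖ ≤ C * t := by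
  intro k
  induction k with
  | zero =>
    intro z hz
    have hmem : ∀ t ∈ Icc (0:ℝ) 1, (1 - (t:ℂ)*z) ∈ Complex.slitPlane := fun t ht =>
      slit_of_U (U_smul hz ht.1 ht.2)
    have hLi1 : (fun t : ℝ => Li 1 ((t:ℂ)*z)) = fun t : ℝ => -Complex.log (1 - (t:ℂ)*z) := by
      funext t; simp [Li]
    have hcont1 : ∀ t : ℝ, ContinuousAt (fun t : ℝ => 1 - (t:ℂ)*z) t := fun t =>
      (continuous_const.sub (Complex.continuous_ofReal.mul continuous_const)).continuousAt
    constructor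
    · rw [hLi1]
      intro t ht
      have hcl : ContinuousAt (fun t : ℝ => Complex.log (1 - (t:ℂ)*z)) t :=
        ContinuousAt.comp (x := t) (continuousAt_clog (hmem t ht)) (hcont1 t)
      exact hcl.neg.continuousWithinAt
    · set g : ℝ → ℂ := fun t => Complex.log (1 - (t:ℂ)*z) with hg
      have hder : ∀ t ∈ Icc (0:ℝ) 1, HasDerivAt g ((1 - (t:ℂ)*z)⁻¹ * (-z)) t := by
        intro t ht
        have inner : HasDerivAt (fun w : ℂ => 1 - w*z) (-z) (t:ℂ) := by
          simpa using ((hasDerivAt_id (t:ℂ)).mul_const z).const_sub 1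
        have h2 : HasDerivAt (fun w : ℂ => Complex.log (1 - w*z))
            ((1 - (t:ℂ)*z)⁻¹ * (-z)) (t:ℂ) := by
          simpa [Function.comp_def] using (Complex.hasDerivAt_log (hmem t ht)).comp (t:ℂ) inner
        exact h2.comp_ofReal
      have hcontd : ContinuousOn (fun t : ℝ => ‖(1 - (t:ℂ)*z)⁻¹ * (-z)‖) (Icc 0 1) := by
        intro t ht
        have h2 : (1 - (t:ℂ)*z) ≠ 0 := Complex.slitPlane_ne_zero (hmem t ht)
        exact ((((hcont1 t).inv₀ h2).mul continuousAt_const).norm).continuousWithinAt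
      obtain ⟨t₀, ht₀, hmax⟩ := isCompact_Icc.exists_isMaxOn (nonempty_Icc.mpr zero_le_one) hcontd
      refine ⟨‖(1 - (t₀:ℂ)*z)⁻¹ * (-z)‖, norm_nonneg _, ?_⟩
      intro t ht
      have key : ‖g t - g 0‖ ≤ ‖(1 - (t₀:ℂ)*z)⁻¹ * (-z)‖ * ‖t - 0‖ :=
        (convex_Icc (0:ℝ) 1).norm_image_sub_le_of_norm_hasDerivWithin_le
          (fun u hu => (hder u hu).hasDerivWithinAt)
          (fun u hu => hmax hu) (left_mem_Icc.mpr zero_le_one) ht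
      have hg0 : g 0 = 0 := by simp [hg]
      have hval : ‖Li 1 ((t:ℂ)*z)‖ = ‖g t‖ := by
        rw [show Li 1 ((t:ℂ)*z) = -Complex.log (1 - (t:ℂ)*z) from congrFun hLi1 t]
        simp [hg]
      rw [hval]
      simpa [hg0, Real.norm_eq_abs, abs_of_nonneg ht.1] using key
  | succ k ih =>
    intro z hz
    obtain ⟨C, hC0, hCb⟩ := (ih z hz).2
    have harg : ∀ s t : ℝ, (s:ℂ) * ((t:ℂ)*z) = ((s*t : ℝ):ℂ) * z := by
      intro s t; push_cast; ring
    have hbnd : ∀ t ∈ Icc (0:ℝ) 1, ∀ s ∈ Ioc (0:ℝ) 1,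
        ‖Li (k+1) ((s:ℂ)*((t:ℂ)*z)) / (s:ℂ)‖ ≤ C * t := by
      intro t ht s hs
      rw [harg, norm_div]
      have h1 : ‖Li (k+1) (((s*t:ℝ):ℂ)*z)‖ ≤ C * (s*t) :=
        hCb (s*t) ⟨mul_nonneg hs.1.le ht.1, mul_le_one₀ hs.2 ht.1 ht.2⟩
      have h2 : ‖((s:ℝ):ℂ)‖ = s := by
        rw [Complex.norm_real, Real.norm_eq_abs, abs_of_pos hs.1]
      rw [h2, div_le_iff₀ hs.1]
      calc ‖Li (k+1) (((s*t:ℝ):ℂ)*z)‖ ≤ C * (s*t) := h1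
        _ = C * t * s := by ring
    have hrep : (fun t : ℝ => Li (k+2) ((t:ℂ)*z))
        = fun t : ℝ => ∫ s in (0:ℝ)..1, Li (k+1) ((s:ℂ)*((t:ℂ)*z)) / (s:ℂ) := by
      funext t; exact Li_two_def k _
    constructor
    · rw [hrep]
      intro t₀ ht₀
      apply intervalIntegral.continuousWithinAt_of_dominated_interval (bound := fun _ => C)
      · apply Filter.Eventually.mono eventually_mem_nhdsWithin
        intro t ht
        have hcont : ContinuousOn (fun s : ℝ => Li (k+1) ((s:ℂ)*((t:ℂ)*z)) / (s:ℂ)) (Ioc 0 1) := by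
          apply ContinuousOn.div
          · exact ((ih ((t:ℂ)*z) (U_smul hz ht.1 ht.2)).1).mono Ioc_subset_Icc_self
          · exact Complex.continuous_ofReal.continuousOn
          · intro s hs
            exact_mod_cast ne_of_gt hs.1
        rw [uIoc_of_le (zero_le_one (α := ℝ))]
        exact hcont.aestronglyMeasurable measurableSet_Ioc
      · apply Filter.Eventually.mono eventually_mem_nhdsWithin
        intro t ht
        apply ae_of_all
        intro s hs
        rw [uIoc_of_le (zero_le_one (α := ℝ))] at hs
        calc ‖Li (k+1) ((s:ℂ)*((t:ℂ)*z)) / (s:ℂ)‖ ≤ C * t := hbnd t ht s hs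
          _ ≤ C := by nlinarith [ht.1, ht.2]
      · exact intervalIntegrable_const
      · apply ae_of_all
        intro s hs
        rw [uIoc_of_le (zero_le_one (α := ℝ))] at hs
        have hz' : (s:ℂ)*z ∈ U := U_smul hz hs.1.le hs.2
        have hfe : (fun t : ℝ => Li (k+1) ((s:ℂ)*((t:ℂ)*z)) / (s:ℂ))
             = fun t : ℝ => Li (k+1) ((t:ℂ)*((s:ℂ)*z)) / (s:ℂ) := by
          funext t; rw [mul_left_comm]
        rw [hfe]
        exact ((ih ((s:ℂ)*z) hz').1 t₀ ht₀).div_const _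
    · refine ⟨C, hC0, ?_⟩
      intro t ht
      rw [congrFun hrep t]
      have hb := intervalIntegral.norm_integral_le_of_norm_le_const (a := (0:ℝ)) (b := 1) (C := C*t)
        (f := fun s : ℝ => Li (k+1) ((s:ℂ)*((t:ℂ)*z)) / (s:ℂ)) ?_
      · simpa using hb
      · intro s hs
        rw [uIoc_of_le (zero_le_one (α := ℝ))] at hs
        exact hbnd t ht s hs

lemma li_integrable (k : ℕ) {z : ℂ} (hz : z ∈ U) :
    IntervalIntegrable (fun t : ℝ => Li (k+1) ((t:ℂ) * z) / (t:ℂ)) volume 0 1 := by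
  obtain ⟨hcont, C, hC0, hCb⟩ := contBound k z hz
  rw [intervalIntegrable_iff, uIoc_of_le (zero_le_one (α := ℝ))]
  have hmeas : AEStronglyMeasurable (fun t : ℝ => Li (k+1) ((t:ℂ) * z) / (t:ℂ))
      (volume.restrict (Ioc 0 1)) := by
    apply ContinuousOn.aestronglyMeasurable _ measurableSet_Ioc
    apply ContinuousOn.div (hcont.mono Ioc_subset_Icc_self) Complex.continuous_ofReal.continuousOn
    intro t ht
    exact_mod_cast ne_of_gt ht.1
  refine Integrable.mono' (g := fun _ => C) (integrableOn_const measure_Ioc_lt_top.ne)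
    hmeas ?_
  refine (ae_restrict_iff' measurableSet_Ioc).mpr (ae_of_all _ fun t ht => ?_)
  rw [norm_div]
  have h2 : ‖((t:ℝ):ℂ)‖ = t := by
    rw [Complex.norm_real, Real.norm_eq_abs, abs_of_pos ht.1]
  rw [h2, div_le_iff₀ ht.1]
  calc ‖Li (k+1) ((t:ℂ)*z)‖ ≤ C * t := hCb t ⟨ht.1.le, ht.2⟩
    _ = C * t := rfl

lemma sq_image_Ioc : (fun t : ℝ => t^2) '' Ioc 0 1 = Ioc 0 1 := by
  ext s
  constructor
  · rintro ⟨t, ⟨ht0, ht1⟩, rfl⟩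
    exact ⟨pow_pos ht0 2, pow_le_one₀ ht0.le ht1⟩
  · rintro ⟨hs0, hs1⟩
    refine ⟨Real.sqrt s, ⟨Real.sqrt_pos.mpr hs0, ?_⟩, Real.sq_sqrt hs0.le⟩
    calc Real.sqrt s ≤ Real.sqrt 1 := Real.sqrt_le_sqrt hs1
      _ = 1 := Real.sqrt_one

lemma li_rel : ∀ k : ℕ, ∀ x ∈ D, Li (k+1) x + Li (k+1) (-x) = Li (k+1) (x^2) / 2^k := by
  intro k
  induction k with
  | zero =>
    intro x hx
    have h1 : (1 - x) ≠ 0 := Complex.slitPlane_ne_zero (slit_of_U (D_sub_U hx))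
    have h2 : (1 + x) ≠ 0 := by
      have := Complex.slitPlane_ne_zero (slit_of_U (D_sub_U (neg_mem_D hx)))
      simpa [sub_neg_eq_add] using this
    have harg : Complex.arg (1-x) + Complex.arg (1+x) ∈ Set.Ioc (-π) π := by
      rcases lt_trichotomy x.im 0 with him | him | him
      · have ha : 0 ≤ (1-x).im := by
          simp only [Complex.sub_im, Complex.one_im, zero_sub]
          linarith
        have hb : (1+x).im < 0 := by
          simp only [Complex.add_im, Complex.one_im, zero_add]
          exact him
        constructor
        · have u1 := Complex.neg_pi_lt_arg (1+x)
          have u2 := Complex.arg_nonneg_iff.mpr ha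
          linarith
        · have u1 := Complex.arg_le_pi (1-x)
          have u2 := Complex.arg_neg_iff.mpr hb
          linarith
      · have hab : ‖x‖ < 1 := by
          rcases hx with h | h
          · exact absurd him h
          · exact h
        have hre : |x.re| < 1 := lt_of_le_of_lt (Complex.abs_re_le_norm x) hab
        have hre' := abs_lt.mp hre
        rw [Complex.arg_eq_zero_iff.mpr ⟨by simp only [Complex.sub_re, Complex.one_re]; linarith,
              by simp only [Complex.sub_im, Complex.one_im, zero_sub, him, neg_zero]⟩,
            Complex.arg_eq_zero_iff.mpr ⟨by simp only [Complex.add_re, Complex.one_re]; linarith,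
              by simp only [Complex.add_im, Complex.one_im, zero_add, him]⟩]
        constructor
        · linarith [Real.pi_pos]
        · linarith [Real.pi_pos]
      · have ha : (1-x).im < 0 := by
          simp only [Complex.sub_im, Complex.one_im, zero_sub]
          linarith
        have hb : 0 ≤ (1+x).im := by
          simp only [Complex.add_im, Complex.one_im, zero_add]
          linarith
        constructor
        · have u1 := Complex.neg_pi_lt_arg (1-x)
          have u2 := Complex.arg_nonneg_iff.mpr hb
          linarith
        · have u1 := Complex.arg_le_pi (1+x)
          have u2 := Complex.arg_neg_iff.mpr ha
          linarith
    have hlog : Complex.log ((1-x)*(1+x)) = Complex.log (1-x) + Complex.log (1+x) :=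
      Complex.log_mul h1 h2 harg
    have hfac : (1-x)*(1+x) = 1 - x^2 := by ring
    show -Complex.log (1-x) + -Complex.log (1-(-x)) = -Complex.log (1-x^2) / 2^0
    rw [sub_neg_eq_add, pow_zero, div_one, ← hfac, hlog]
    ring
  | succ k ih =>
    intro x hx
    have hxU : x ∈ U := D_sub_U hx
    have hxU' : -x ∈ U := D_sub_U (neg_mem_D hx)
    have hx2U : x^2 ∈ U := sq_mem_U hx
    set g : ℝ → ℂ := fun s => Li (k+1) ((s:ℂ) * x^2) / (s:ℂ) with hgdef
    have e1 : Li (k+2) x + Li (k+2) (-x)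
        = ∫ t in (0:ℝ)..1, (Li (k+1) ((t:ℂ)*x)/(t:ℂ) + Li (k+1) ((t:ℂ)*(-x))/(t:ℂ)) := by
      rw [Li_two_def, Li_two_def,
        ← intervalIntegral.integral_add (li_integrable k hxU) (li_integrable k hxU')]
    have e2 : EqOn (fun t : ℝ => Li (k+1) ((t:ℂ)*x)/(t:ℂ) + Li (k+1) ((t:ℂ)*(-x))/(t:ℂ))
        (fun t : ℝ => ((2:ℂ)^(k+1))⁻¹ * (|2*t| • g (t^2))) (uIcc 0 1) := by
      intro t ht
      rw [uIcc_of_le (zero_le_one (α := ℝ))] at ht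
      rcases eq_or_lt_of_le ht.1 with h0 | h0
      · subst h0
        simp [hgdef, Li_zero]
      · have hrel := ih ((t:ℂ)*x) (D_smul hx h0 ht.2)
        have hneg : (t:ℂ)*(-x) = -((t:ℂ)*x) := by ring
        simp only [hneg]
        rw [← add_div, hrel]
        have habs : |2*t| = 2*t := abs_of_pos (by linarith)
        rw [habs, hgdef]
        have harg2 : ((t:ℂ)*x)^2 = (((t^2 : ℝ)):ℂ) * x^2 := by push_cast; ring
        rw [harg2]
        have ht0 : ((t:ℝ):ℂ) ≠ 0 := by exact_mod_cast ne_of_gt h0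
        have h2k : ((2:ℂ))^k ≠ 0 := pow_ne_zero _ two_ne_zero
        push_cast
        rw [Complex.real_smul]
        push_cast
        field_simp
        ring
    have e3 : (∫ t in (0:ℝ)..1, (Li (k+1) ((t:ℂ)*x)/(t:ℂ) + Li (k+1) ((t:ℂ)*(-x))/(t:ℂ)))
        = ((2:ℂ)^(k+1))⁻¹ * ∫ t in (0:ℝ)..1, (|2*t| • g (t^2)) := by
      rw [intervalIntegral.integral_congr e2]
      exact intervalIntegral.integral_const_mul _ _
    have e4 : (∫ t in (0:ℝ)..1, (|2*t| • g (t^2))) = ∫ s in (0:ℝ)..1, g s := by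
      rw [intervalIntegral.integral_of_le (zero_le_one (α := ℝ)),
        intervalIntegral.integral_of_le (zero_le_one (α := ℝ))]
      have himg := MeasureTheory.integral_image_eq_integral_abs_deriv_smul
        (measurableSet_Ioc (a := (0:ℝ)) (b := 1))
        (f := fun t : ℝ => t^2) (f' := fun t : ℝ => 2*t) ?_ ?_ g
      · rw [sq_image_Ioc] at himg
        rw [himg]
      · intro t ht
        have := (hasDerivAt_pow 2 t).hasDerivWithinAt (s := Ioc (0:ℝ) 1)
        simpa [mul_comm] using this
      · intro a ha b hb h
        exact (pow_left_inj₀ ha.1.le hb.1.le two_ne_zero).mp h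
    have e5 : Li (k+2) (x^2) = ∫ s in (0:ℝ)..1, g s := Li_two_def k (x^2)
    rw [e1, e3, e4, ← e5, inv_mul_eq_div]

end SvDist

/-- The distribution relation `ℒₙ(x) + ℒₙ(-x) = ℒₙ(x²)/2^(n-1)` for `n ≥ 2`,
in the domain where both sides are defined (i.e. excluding real `x` with `|x| ≥ 1`,
so that `x`, `-x` and `x²` avoid the cut `[1,∞)`). -/
theorem sv_distribution (n : ℕ) (hn : 2 ≤ n) (x : ℂ)
    (hdom : x.im ≠ 0 ∨ ‖x‖ < 1) :
    sv n x + sv n (-x) = sv n (x^2) / 2^(n-1) := by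
  have hx : x ∈ SvDist.D := hdom
  have key : ∀ j, j < n → Li (n-j) x + Li (n-j) (-x) = Li (n-j) (x^2) / 2^(n-j-1) := by
    intro j hj
    obtain ⟨k, hk⟩ : ∃ k, n - j = k + 1 := ⟨n - j - 1, by omega⟩
    rw [hk]
    simp only [Nat.add_sub_cancel]
    exact SvDist.li_rel k x hx
  have habs : ‖-x‖ = ‖x‖ := by simp
  have habs2 : Real.log ‖x^2‖ = 2 * Real.log ‖x‖ := by
    rw [norm_pow, Real.log_pow]
    push_cast
    ring
  unfold sv
  rw [habs, habs2]
  have hsum : (∑ j ∈ Finset.range n,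
        (2:ℂ)^j * ((bernoulli j : ℚ) : ℂ) / (Nat.factorial j : ℂ)
          * ((Real.log (‖x‖) : ℂ))^j * Li (n - j) x)
      + (∑ j ∈ Finset.range n,
        (2:ℂ)^j * ((bernoulli j : ℚ) : ℂ) / (Nat.factorial j : ℂ)
          * ((Real.log (‖x‖) : ℂ))^j * Li (n - j) (-x))
      = (∑ j ∈ Finset.range n,
        (2:ℂ)^j * ((bernoulli j : ℚ) : ℂ) / (Nat.factorial j : ℂ)
          * (((2 * Real.log (‖x‖) : ℝ)) : ℂ)^j * Li (n - j) (x^2)) / 2^(n-1) := by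
    rw [← Finset.sum_add_distrib, Finset.sum_div]
    refine Finset.sum_congr rfl fun j hj => ?_
    have hj' := Finset.mem_range.mp hj
    rw [mul_assoc, mul_assoc, ← mul_add, ← mul_add, key j hj']
    have hpow : (2:ℂ)^(n-1) = 2^j * 2^(n-j-1) := by
      rw [← pow_add]
      congr 1
      omega
    have h2L : (((2 * Real.log (‖x‖) : ℝ)) : ℂ) = 2 * (Real.log (‖x‖) : ℂ) := by
      push_cast
      ring
    rw [h2L, hpow, mul_pow]
    have hne1 : (2:ℂ)^(n-j-1) ≠ 0 := pow_ne_zero _ two_ne_zero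
    have hne2 : (2:ℂ)^j ≠ 0 := pow_ne_zero _ two_ne_zero
    have hne3 : ((Nat.factorial j : ℕ) : ℂ) ≠ 0 := Nat.cast_ne_zero.mpr (Nat.factorial_ne_zero j)
    field_simp
  unfold reN
  by_cases ho : Odd n
  · simp only [if_pos ho]
    rw [← Complex.add_re, hsum,
      show ((2:ℂ)^(n-1)) = (((2:ℝ)^(n-1) : ℝ) : ℂ) by push_cast; ring,
      Complex.div_ofReal_re]
  · simp only [if_neg ho]
    rw [← Complex.add_im, hsum,
      show ((2:ℂ)^(n-1)) = (((2:ℝ)^(n-1) : ℝ) : ℂ) by push_cast; ring,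
      Complex.div_ofReal_im]
end

section
/- ∑_{k=1}^∞ (2/(k·2ᵏ)) ∑_{l=1}^{k} C(k,l) (1−(−1)ˡ)/l = π²/2. -/
open scoped Real

set_option maxHeartbeats 2000000 in
lemma aux_hasSum_odd_sq :
    HasSum (fun k : ℕ => (1:ℝ) / ((2*k+1 : ℕ):ℝ)^2) (π^2/8) := by
  set f : ℕ → ℝ := fun n => 1 / (n:ℝ)^2 with hf
  have h : HasSum f (π^2/6) := hasSum_zeta_two
  have he : HasSum (fun k => f (2*k)) (π^2/24) := by
    have h4 := h.mul_left (1/4 : ℝ)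
    have heq : (fun k : ℕ => f (2*k)) = fun k : ℕ => (1/4 : ℝ) * f k := by
      funext k
      simp only [hf]
      push_cast
      rw [mul_pow, one_div, one_div, mul_inv]
      ring
    rw [heq]
    convert h4 using 1
    rfl
    ring
  have hso : Summable (fun k => f (2*k+1)) :=
    Summable.comp_injective h.summable (i := fun k => 2*k+1) (fun a b hab => by simp only at hab; omega)
  have ho := hso.hasSum
  have huniq := h.unique (he.even_add_odd ho)
  have hT : ∑' k, f (2*k+1) = π^2/8 := by linarith
  rw [hT] at ho
  exact ho

lemma aux_hasSum_outer :
    HasSum (fun l : ℕ => (1 - (-1:ℝ)^l) * 2 / (l:ℝ)^2) (π^2/2) := by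
  set g : ℕ → ℝ := fun l => (1 - (-1:ℝ)^l) * 2 / (l:ℝ)^2 with hg
  have heven : HasSum (fun k => g (2*k)) 0 := by
    have heq : (fun k : ℕ => g (2*k)) = fun _ => (0:ℝ) := by
      funext k
      simp only [hg]
      rw [pow_mul]
      norm_num
    rw [heq]
    exact hasSum_zero
  have hodd : HasSum (fun k => g (2*k+1)) (π^2/2) := by
    have h4 := aux_hasSum_odd_sq.mul_left (4:ℝ)
    have heq : (fun k : ℕ => g (2*k+1)) =
        fun k : ℕ => (4:ℝ) * ((1:ℝ) / ((2*k+1 : ℕ):ℝ)^2) := by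
      funext k
      simp only [hg]
      rw [pow_succ, pow_mul]
      norm_num
      ring
    rw [heq]
    convert h4 using 1
    rfl
    ring
  simpa using heven.even_add_odd hodd

/-- `∑_{k≥n+1} C(k,n+1)/(k·2^k) = 1/(n+1)`. -/
lemma aux_hasSum_choose (n : ℕ) :
    HasSum (fun k : ℕ => (Nat.choose k (n+1) : ℝ) / (k * 2 ^ k)) (1 / (n+1)) := by
  have hgeo : HasSum (fun m : ℕ => ((m + n).choose n : ℝ) * (1/2 : ℝ) ^ m)
      (1 / (1 - 1/2 : ℝ) ^ (n + 1)) :=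
    hasSum_choose_mul_geometric_of_norm_lt_one n (by norm_num)
  have h := hgeo.mul_left (1 / ((n+1) * 2^(n+1)) : ℝ)
  have hval : (1 / ((n+1) * 2^(n+1)) : ℝ) * (1 / (1 - 1/2 : ℝ) ^ (n + 1)) = 1 / (n+1) := by
    have h2 : (1 - 1/2 : ℝ) = 1/2 := by norm_num
    rw [h2, div_pow]
    have h2n : (2:ℝ)^(n+1) ≠ 0 := by positivity
    have hn1 : ((n:ℝ)+1) ≠ 0 := by positivity
    field_simp
    ring
  have hshift : HasSum
      (fun m : ℕ => (Nat.choose (m + (n+1)) (n+1) : ℝ) / ((m + (n+1) : ℕ) * 2 ^ (m + (n+1))))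
      (1 / (n+1)) := by
    rw [← hval]
    convert h using 1
    rfl
    funext m
    have key : (m + n + 1) * Nat.choose (m+n) n = Nat.choose (m+n+1) (n+1) * (n+1) :=
      Nat.add_one_mul_choose_eq (m+n) n
    have keyR : ((m:ℝ) + n + 1) * ((m+n).choose n : ℝ) =
        ((m+n+1).choose (n+1) : ℝ) * ((n:ℝ)+1) := by exact_mod_cast key
    have hmn : m + (n+1) = m + n + 1 := by omega
    rw [hmn]
    push_cast
    have hd1 : ((m:ℝ) + n + 1) ≠ 0 := by positivity
    have hd2 : (2:ℝ) ^ (m+n+1) ≠ 0 := by positivity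
    have hd3 : ((n:ℝ)+1) ≠ 0 := by positivity
    rw [pow_add]
    have hpow : (2:ℝ)^(n+1) * 2^m = 2^(m+n) * 2 := by rw [pow_add, pow_add]; ring
    field_simp
    rw [show (2:ℝ)^(m+n) = 2^m * 2^n from pow_add _ _ _, one_div, inv_pow, pow_succ]
    have hm : (2:ℝ)^m * (2^m)⁻¹ = 1 := mul_inv_cancel₀ (by positivity)
    linear_combination (-(2:ℝ)^n*2) * keyR - (2:ℝ)^n*2*((m:ℝ)+n+1)*((m+n).choose n:ℝ) * hm
  have hmain := (hasSum_nat_add_iff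
    (f := fun k : ℕ => (Nat.choose k (n+1) : ℝ) / (k * 2 ^ k)) (n+1)).mp hshift
  have hz : ∑ i ∈ Finset.range (n+1), (Nat.choose i (n+1) : ℝ) / (i * 2 ^ i) = 0 := by
    apply Finset.sum_eq_zero
    intro i hi
    rw [Nat.choose_eq_zero_of_lt (Finset.mem_range.mp hi)]
    simp
  rwa [hz, add_zero] at hmain

set_option maxHeartbeats 2000000 in
/-- `∑_{k=1}^∞ (2/(k·2^k)) ∑_{l=1}^{k} C(k,l)(1−(−1)^l)/l = π²/2`. -/
theorem double_sum_pi_sq :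
    ∑' k : ℕ+, (2 / ((k : ℕ) * 2^(k : ℕ)) : ℝ) *
      ∑ l ∈ Finset.Icc 1 (k : ℕ), (Nat.choose (k : ℕ) l : ℝ) * (1 - (-1:ℝ)^l) / l
    = π^2 / 2 := by
  set F : ℕ → ℕ → ℝ :=
    fun l k => 2 / ((k:ℝ) * 2^k) * ((Nat.choose k l : ℝ) * (1 - (-1:ℝ)^l) / l) with hF
  set G : ℕ → ℝ := fun k => (2 / ((k:ℝ) * 2^k)) *
      ∑ l ∈ Finset.Icc 1 k, (Nat.choose k l : ℝ) * (1 - (-1:ℝ)^l) / l with hG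
  have hpm : ∀ l : ℕ, (-1:ℝ)^l = 1 ∨ (-1:ℝ)^l = -1 := fun l =>
    (Nat.even_or_odd l).elim (fun h => Or.inl h.neg_one_pow) (fun h => Or.inr h.neg_one_pow)
  have hFnonneg : ∀ l k, 0 ≤ F l k := by
    intro l k
    rcases hpm l with h | h <;> simp only [hF, h] <;> positivity
  have hfiber : ∀ l : ℕ, HasSum (fun k => F l k) ((1 - (-1:ℝ)^l) * 2 / (l:ℝ)^2) := by
    intro l
    rcases Nat.even_or_odd l with he | ho
    · have h1 : (-1:ℝ)^l = 1 := he.neg_one_pow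
      have heq : (fun k => F l k) = fun _ => (0:ℝ) := by
        funext k; simp only [hF, h1]; ring
      rw [heq, h1]
      simpa using hasSum_zero
    · have h1 : (-1:ℝ)^l = -1 := ho.neg_one_pow
      have hl1 : 1 ≤ l := ho.pos
      obtain ⟨n, rfl⟩ : ∃ n, l = n + 1 := ⟨l - 1, by omega⟩
      have h := (aux_hasSum_choose n).mul_left (4 / ((n:ℝ)+1))
      have heq : (fun k => F (n+1) k) =
          fun k => (4 / ((n:ℝ)+1)) * ((Nat.choose k (n+1) : ℝ) / (k * 2^k)) := by
        funext k; simp only [hF, h1]; push_cast; ring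
      rw [heq, h1]
      convert h using 1
      rfl
      have hd : ((n:ℝ)+1) ≠ 0 := by positivity
      push_cast
      field_simp
      ring
  have hcol : ∀ k : ℕ, Summable fun l => F l k := by
    intro k
    apply summable_of_ne_finset_zero (s := Finset.range (k+1))
    intro l hl
    have hkl : k < l := by simpa using hl
    simp only [hF]
    simp [Nat.choose_eq_zero_of_lt hkl]
  have hsum2 : Summable (fun l : ℕ => (1 - (-1:ℝ)^l) * 2 / (l:ℝ)^2) :=
    aux_hasSum_outer.summable
  have hprod : Summable (fun p : ℕ × ℕ => F p.1 p.2) := by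
    rw [summable_prod_of_nonneg (fun p => hFnonneg p.1 p.2)]
    refine ⟨fun l => (hfiber l).summable, ?_⟩
    have heq : (fun l : ℕ => ∑' k, F l k) =
        fun l : ℕ => (1 - (-1:ℝ)^l) * 2 / (l:ℝ)^2 := by
      funext l; exact (hfiber l).tsum_eq
    rw [heq]; exact hsum2
  have hswap : ∑' (k : ℕ) (l : ℕ), F l k = ∑' (l : ℕ) (k : ℕ), F l k :=
    Summable.tsum_comm' hprod (fun l => (hfiber l).summable) hcol
  have hrow : ∀ k : ℕ, G k = ∑' l, F l k := by
    intro k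
    rw [hG]
    simp only
    rw [tsum_eq_sum (s := Finset.Icc 1 k) ?_, Finset.mul_sum]
    intro l hl
    simp only [Finset.mem_Icc, not_and_or, not_le] at hl
    rcases hl with hl | hl
    · interval_cases l
      simp only [hF]
      norm_num
    · simp only [hF]
      simp [Nat.choose_eq_zero_of_lt hl]
  have hpnat : ∑' k : ℕ+, G (k : ℕ) = ∑' k : ℕ, G k := by
    apply Function.Injective.tsum_eq (fun a b hab => PNat.coe_injective hab)
    intro x hx
    rw [Function.mem_support] at hx
    rcases Nat.eq_zero_or_pos x with rfl | hpos
    · exfalso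
      apply hx
      simp only [hG]
      norm_num
    · exact ⟨⟨x, hpos⟩, rfl⟩
  calc ∑' k : ℕ+, (2 / ((k : ℕ) * 2^(k : ℕ)) : ℝ) *
        ∑ l ∈ Finset.Icc 1 (k : ℕ), (Nat.choose (k : ℕ) l : ℝ) * (1 - (-1:ℝ)^l) / l
      = ∑' k : ℕ, G k := hpnat
    _ = ∑' (k : ℕ) (l : ℕ), F l k := tsum_congr hrow
    _ = ∑' (l : ℕ) (k : ℕ), F l k := hswap
    _ = ∑' l : ℕ, (1 - (-1:ℝ)^l) * 2 / (l:ℝ)^2 := tsum_congr fun l => (hfiber l).tsum_eq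
    _ = π^2 / 2 := aux_hasSum_outer.tsum_eq
end
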